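/- Let ᾱ > 0, σ > 0, ν̄ > 0 and set τ̄ := (1/ᾱ)·σ/(1+σ). Let T > 0 and let x, e : [0,T] → ℝⁿ be differentiable functions such that e(0) = 0, e′(t) = −x′(t) for all t ∈ [0,T], and ‖x′(t)‖ ≤ ᾱ·(‖x(t)‖ + ‖e(t)‖ + ν̄) for all t ∈ [0,T]. Then ‖e(t)‖ ≤ σ·(‖x(t)‖ + ν̄) for all t ∈ [0, min(T, τ̄)]. -/

import Mathlib

open Matrix

open Set Filter Metric Topology in
theorem stmt_14 (n : ℕ) (α σ ν τ : ℝ) (hα : 0 < α) (hσ : 0 < σ) (hν : 0 < ν)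
    (hτ : τ = (1 / α) * (σ / (1 + σ)))
    (T : ℝ) (hT : 0 < T)
    (x e x' e' : ℝ → EuclideanSpace ℝ (Fin n))
    (hx : ∀ t ∈ Set.Icc (0 : ℝ) T, HasDerivWithinAt x (x' t) (Set.Icc 0 T) t)
    (he : ∀ t ∈ Set.Icc (0 : ℝ) T, HasDerivWithinAt e (e' t) (Set.Icc 0 T) t)
    (he0 : e 0 = 0)
    (hee : ∀ t ∈ Set.Icc (0 : ℝ) T, e' t = -x' t)
    (hbound : ∀ t ∈ Set.Icc (0 : ℝ) T, ‖x' t‖ ≤ α * (‖x t‖ + ‖e t‖ + ν)) :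
    ∀ t ∈ Set.Icc (0 : ℝ) (min T τ), ‖e t‖ ≤ σ * (‖x t‖ + ν) := by
  intro t ht
  set m := min T τ with hm
  have h1σ : (0:ℝ) < 1 + σ := by linarith
  have hτpos : 0 < τ := by rw [hτ]; positivity
  have hατ : α * τ = σ / (1 + σ) := by
    rw [hτ]; field_simp
  have hατ1 : α * τ < 1 := by
    rw [hατ, div_lt_one h1σ]; linarith
  have hmT : m ≤ T := min_le_left _ _
  have hmτ : m ≤ τ := min_le_right _ _
  have hsub : Icc (0:ℝ) m ⊆ Icc 0 T := Icc_subset_Icc le_rfl hmT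
  have hxc : ContinuousOn x (Icc (0:ℝ) T) := fun s hs => (hx s hs).continuousWithinAt
  have hec : ContinuousOn e (Icc (0:ℝ) T) := fun s hs => (he s hs).continuousWithinAt
  set V : ℝ → ℝ := fun s => ‖x s‖ + ν with hV
  set u : ℝ → ℝ := fun s => ‖e s‖ with hu
  set ρ : ℝ → ℝ := fun s => u s / V s with hρ
  have hVpos : ∀ s, 0 < V s := fun s => by
    have := norm_nonneg (x s); simp only [hV]; linarith
  have hunn : ∀ s, 0 ≤ u s := fun s => norm_nonneg _
  have hρc : ContinuousOn ρ (Icc (0:ℝ) m) := by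
    apply ContinuousOn.div ((hec.norm).mono hsub)
      (((hxc.norm).add continuousOn_const).mono hsub)
    exact fun s _ => (hVpos s).ne'
  -- the key slope estimate
  have key : ∀ t0 ∈ Ico (0:ℝ) m, ∀ r, α * (1 + ρ t0)^2 < r →
      ∃ᶠ z in 𝓝[>] t0, slope ρ t0 z < r := by
    intro t0 ht0 r hr
    apply Filter.Eventually.frequently
    have ht0T : t0 ∈ Icc (0:ℝ) T := ⟨ht0.1, ht0.2.le.trans hmT⟩
    have ht0ltT : t0 < T := lt_of_lt_of_le ht0.2 hmT
    set U := u t0 with hUdef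
    set W := V t0 with hWdef
    have hW : 0 < W := hVpos t0
    have hU : 0 ≤ U := hunn t0
    have hUW : 0 < U + W := by linarith
    have hρ0 : ρ t0 = U / W := rfl
    -- rewrite the hypothesis
    have hr' : α * (U + W)^2 / W^2 < r := by
      have h1 : 1 + ρ t0 = (U + W) / W := by
        rw [hρ0]; field_simp; ring
      calc α * (U + W)^2 / W^2 = α * ((U + W)/W)^2 := by
            rw [div_pow]; ring
        _ = α * (1 + ρ t0)^2 := by rw [h1]
        _ < r := hr
    obtain ⟨r₁, hr₁l, hr₁r⟩ := exists_between hr'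
    have hr₁pos : 0 < r₁ := lt_of_le_of_lt (by positivity) hr₁l
    have hrpos : 0 < r := hr₁pos.trans hr₁r
    set C := r₁ * W^2 / (U + W) with hCdef
    have hCpos : 0 < C := by positivity
    have hCUW : C * (U + W) = r₁ * W^2 := by
      rw [hCdef]; field_simp
    have hαW2 : α * (U + W)^2 < r₁ * W^2 := (div_lt_iff₀ (by positivity)).1 hr₁l
    have hC0C : α * (U + W) < C := by
      rw [hCdef, lt_div_iff₀ hUW]
      nlinarith
    -- continuity: choose δ
    have hgc : ContinuousOn (fun s => α * (‖x s‖ + ‖e s‖ + ν)) (Icc (0:ℝ) T) :=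
      continuousOn_const.mul (((hxc.norm).add (hec.norm)).add continuousOn_const)
    have hgt0 : α * (‖x t0‖ + ‖e t0‖ + ν) < C := by
      have : ‖x t0‖ + ‖e t0‖ + ν = U + W := by
        simp only [hUdef, hWdef, hu, hV]; ring
      rw [this]; exact hC0C
    have hev : ∀ᶠ s in 𝓝[Icc (0:ℝ) T] t0, α * (‖x s‖ + ‖e s‖ + ν) < C :=
      (hgc t0 ht0T) (Iio_mem_nhds hgt0)
    obtain ⟨δ, hδpos, hball⟩ := Metric.mem_nhdsWithin_iff.1 hev
    -- choose d0
    have hrr : 0 < 1 - r₁ / r := by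
      rw [sub_pos, div_lt_one hrpos]; exact hr₁r
    set d0 := W * (1 - r₁ / r) / C with hd0def
    have hd0pos : 0 < d0 := by positivity
    set d1 := min d0 (min δ (T - t0)) with hd1def
    have hd1pos : 0 < d1 := by
      apply lt_min hd0pos (lt_min hδpos (by linarith))
    filter_upwards [Ioo_mem_nhdsGT_of_mem (⟨le_rfl, by linarith⟩ : t0 ∈ Ico t0 (t0 + d1))]
      with z hz
    set d := z - t0 with hddef
    have hdpos : 0 < d := by simp only [hddef]; linarith [hz.1]
    have hdd1 : d < d1 := by simp only [hddef]; linarith [hz.2]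
    have hdd0 : d < d0 := lt_of_lt_of_le hdd1 (min_le_left _ _)
    have hdδ : d < δ := lt_of_lt_of_le hdd1 ((min_le_right _ _).trans (min_le_left _ _))
    have hzT : z ≤ T := by
      have : d1 ≤ T - t0 := (min_le_right _ _).trans (min_le_right _ _)
      simp only [hddef] at hdd1; linarith
    have ht0z : t0 ≤ z := by linarith
    have hsub2 : Icc t0 z ⊆ Icc (0:ℝ) T := Icc_subset_Icc ht0.1 hzT
    have hCbd : ∀ s ∈ Icc t0 z, ‖x' s‖ < C := by
      intro s hs
      have hsT : s ∈ Icc (0:ℝ) T := hsub2 hs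
      have hsball : s ∈ ball t0 δ := by
        rw [mem_ball, Real.dist_eq, abs_lt]
        constructor <;> [linarith [hs.1]; linarith [hs.2, hdδ]]
      have := hball ⟨hsball, hsT⟩
      exact lt_of_le_of_lt (hbound s hsT) this
    -- mean value estimates
    have hxz : ‖x z - x t0‖ ≤ C * (z - t0) := by
      apply norm_image_sub_le_of_norm_deriv_le_segment'
        (f' := x') (fun s hs => (hx s (hsub2 hs)).mono hsub2)
        (fun s hs => (hCbd s (Ico_subset_Icc_self hs)).le) z (right_mem_Icc.2 ht0z)
    have hez : ‖e z - e t0‖ ≤ C * (z - t0) := by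
      apply norm_image_sub_le_of_norm_deriv_le_segment'
        (f' := e') (fun s hs => (he s (hsub2 hs)).mono hsub2)
        (fun s hs => ?_) z (right_mem_Icc.2 ht0z)
      rw [hee s (hsub2 (Ico_subset_Icc_self hs)), norm_neg]
      exact (hCbd s (Ico_subset_Icc_self hs)).le
    rw [← hddef] at hxz hez
    have huz : u z ≤ U + C * d := by
      have h1 : ‖e z‖ - ‖e t0‖ ≤ ‖e z - e t0‖ := norm_sub_norm_le _ _
      simp only [hUdef, hu]
      linarith [h1, hez]
    have hVz : W - C * d ≤ V z := by
      have h1 : ‖x t0‖ - ‖x z‖ ≤ ‖x t0 - x z‖ := norm_sub_norm_le _ _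
      rw [norm_sub_rev] at h1
      simp only [hWdef, hV]
      linarith [h1, hxz]
    -- positivity of W - C*d
    have hWd : W * (r₁ / r) < W - C * d := by
      have hCd : C * d < W * (1 - r₁ / r) := by
        calc C * d < C * d0 := by exact (mul_lt_mul_iff_right₀ hCpos).2 hdd0
          _ = W * (1 - r₁ / r) := by
            rw [hd0def, mul_comm, div_mul_cancel₀ _ hCpos.ne']
      linarith
    have hWdpos : 0 < W - C * d := lt_of_le_of_lt (by positivity) hWd
    -- the ratio estimate
    have hρz : ρ z ≤ (U + C * d) / (W - C * d) := by
      exact div_le_div₀ (by positivity) huz hWdpos hVz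
    -- conclude slope bound
    rw [slope_def_field, div_lt_iff₀ hdpos]
    have h2 : (U + C*d)/(W - C*d) - U/W = C*d*(U+W)/(W*(W - C*d)) := by
      field_simp; ring
    have h3 : C*d*(U+W)/(W*(W - C*d)) < r * d := by
      rw [div_lt_iff₀ (by positivity)]
      -- C*d*(U+W) < r*d*(W*(W-C*d))
      have h4 : C * (U + W) < r * (W * (W - C*d)) := by
        have h5 : r * (W * (W * (r₁/r))) = r₁ * W^2 := by
          field_simp
        calc C * (U + W) = r₁ * W^2 := hCUW
          _ = r * (W * (W * (r₁/r))) := h5.symm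
          _ < r * (W * (W - C*d)) :=
            mul_lt_mul_of_pos_left (mul_lt_mul_of_pos_left hWd hW) hrpos
      linarith [mul_lt_mul_of_pos_left h4 hdpos]
    have h6 : ρ z - ρ t0 ≤ (U + C*d)/(W - C*d) - U/W := by
      rw [hρ0]; linarith
    calc ρ z - ρ t0 ≤ C*d*(U+W)/(W*(W - C*d)) := by rw [← h2]; exact h6
      _ < r * d := h3
  -- comparison with the barrier for each a > α
  have main : ∀ a, α < a → a < 1/τ → ∀ s ∈ Icc (0:ℝ) m, ρ s ≤ a*s/(1 - a*s) := by
    intro a haα ha1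
    have hapos : 0 < a := hα.trans haα
    have hat1 : ∀ s ∈ Icc (0:ℝ) m, a * s < 1 := by
      intro s hs
      calc a * s ≤ a * τ := by
            apply mul_le_mul_of_nonneg_left (hs.2.trans hmτ) hapos.le
        _ < (1/τ) * τ := by exact (mul_lt_mul_iff_left₀ hτpos).2 ha1
        _ = 1 := by field_simp
    intro s hs
    refine image_le_of_liminf_slope_right_lt_deriv_boundary'
      (f' := fun t => α * (1 + ρ t)^2) (B := fun t => a*t/(1 - a*t))
      (B' := fun t => a/(1 - a*t)^2) hρc key ?_ ?_ ?_ ?_ hs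
    · -- ρ 0 ≤ B 0
      simp [hρ, hu, he0]
    · -- continuity of B
      apply ContinuousOn.div (continuousOn_const.mul continuousOn_id)
        (continuousOn_const.sub (continuousOn_const.mul continuousOn_id))
      exact fun t htm => by have := hat1 t htm; intro h; simp only [Pi.sub_apply, Pi.mul_apply, id] at h; rw [sub_eq_zero] at h; linarith
    · -- derivative of B
      intro t htm
      have hne : 1 - a*t ≠ 0 := by
        have := hat1 t (Ico_subset_Icc_self htm); intro h; rw [sub_eq_zero] at h; linarith
      have h1 : HasDerivAt (fun t : ℝ => a*t) a t := by
        simpa using (hasDerivAt_id t).const_mul a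
      have h2 : HasDerivAt (fun t : ℝ => 1 - a*t) (-a) t := by
        simpa using h1.const_sub 1
      have h3 := h1.div h2 hne
      have h4 : (a * (1 - a * t) - a * t * -a) / (1 - a * t) ^ 2 = a/(1 - a*t)^2 := by
        field_simp; ring
      rw [h4] at h3
      exact h3.hasDerivWithinAt
    · -- bound at touching points
      intro t htm htouch
      have hat : a * t < 1 := hat1 t (Ico_subset_Icc_self htm)
      have h1at : 0 < 1 - a*t := by linarith
      have h1 : 1 + ρ t = 1/(1 - a*t) := by
        rw [htouch]; field_simp; ring
      rw [h1]
      rw [div_pow, one_pow, mul_one_div]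
      exact (div_lt_div_iff_of_pos_right (by positivity)).2 haα
  -- take the limit a → α⁺
  have htm : t ∈ Icc (0:ℝ) m := ht
  have hαt1 : α * t < 1 := by
    calc α * t ≤ α * τ := mul_le_mul_of_nonneg_left (htm.2.trans hmτ) hα.le
      _ < 1 := hατ1
  have h1αt : 0 < 1 - α * t := by linarith
  have hρt : ρ t ≤ α*t/(1 - α*t) := by
    have hcont : ContinuousAt (fun a : ℝ => a*t/(1 - a*t)) α := by
      apply ContinuousAt.div
      · exact (continuous_id.mul continuous_const).continuousAt
      · exact (continuous_const.sub (continuous_id.mul continuous_const)).continuousAt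
      · exact h1αt.ne'
    have htend : Tendsto (fun a : ℝ => a*t/(1 - a*t)) (𝓝[>] α) (𝓝 (α*t/(1 - α*t))) :=
      hcont.continuousWithinAt
    apply ge_of_tendsto htend
    have hα1τ : α < 1/τ := by
      rw [lt_div_iff₀ hτpos]; exact hατ1
    filter_upwards [Ioo_mem_nhdsGT_of_mem (⟨le_rfl, hα1τ⟩ : α ∈ Ico α (1/τ))] with a ha
    exact main a ha.1 ha.2 t htm
  have hfin : ρ t ≤ σ := by
    refine hρt.trans ?_
    rw [div_le_iff₀ h1αt]
    have hts : α * t ≤ σ/(1+σ) := by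
      calc α * t ≤ α * τ := mul_le_mul_of_nonneg_left (htm.2.trans hmτ) hα.le
        _ = σ/(1+σ) := hατ
    have h2 : α*t*(1+σ) ≤ σ := by
      rw [← le_div_iff₀ h1σ]; exact hts
    linarith [h2]
  have := (div_le_iff₀ (hVpos t)).1 hfin
  simpa [hρ, hu, hV] using this
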